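/- Let A be an n×n real matrix and B an n×m real matrix, and suppose x = ∫_{t₀}^{t} e^{A(t−τ)} B u(τ) dτ for some continuous u : [t₀,t] → ℝ^m. Then x ∈ ⟨A|B⟩ = Σ_{i=0}^{n-1} A^i (range B). -/

import Mathlib

open scoped Nat
set_option maxHeartbeats 1000000

/-- The controllable subspace `⟨A|B⟩ = Σ_{i=0}^{n-1} A^i (range B)`. -/
def ctrlSub {n m : ℕ} (A : Matrix (Fin n) (Fin n) ℝ) (B : Matrix (Fin n) (Fin m) ℝ) :
    Submodule ℝ (Fin n → ℝ) :=
  ⨆ i : Fin n, Submodule.map ((A ^ (i : ℕ)).mulVecLin) (LinearMap.range B.mulVecLin)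

/-- `M ↦ M *ᵥ w` as a linear map. -/
noncomputable def mulVecAt {k l : ℕ} (w : Fin l → ℝ) :
    Matrix (Fin k) (Fin l) ℝ →ₗ[ℝ] (Fin k → ℝ) where
  toFun M := M.mulVec w
  map_add' M N := Matrix.add_mulVec M N w
  map_smul' c M := Matrix.smul_mulVec c M w

@[simp] lemma mulVecAt_apply {k l : ℕ} (w : Fin l → ℝ) (M : Matrix (Fin k) (Fin l) ℝ) :
    mulVecAt w M = M.mulVec w := rfl

lemma pow_mulVec_mem_ctrlSub {n m : ℕ} (A : Matrix (Fin n) (Fin n) ℝ)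
    (B : Matrix (Fin n) (Fin m) ℝ) (k : ℕ) (w : Fin n → ℝ)
    (hw : w ∈ LinearMap.range B.mulVecLin) : (A ^ k).mulVec w ∈ ctrlSub A B := by
  induction k using Nat.strong_induction_on with
  | _ k ih =>
    by_cases hk : k < n
    · refine le_iSup (fun i : Fin n =>
        Submodule.map ((A ^ (i : ℕ)).mulVecLin) (LinearMap.range B.mulVecLin)) ⟨k, hk⟩ ?_
      exact ⟨w, hw, rfl⟩
    · push_neg at hk
      have hmonic := A.charpoly_monic
      have hdeg : A.charpoly.natDegree = n := by
        simp [Matrix.charpoly_natDegree_eq_dim]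
      have h0 := Matrix.aeval_self_charpoly A
      rw [Polynomial.aeval_eq_sum_range, hdeg, Finset.sum_range_succ] at h0
      have hcn : A.charpoly.coeff n = 1 := by
        have := hmonic.coeff_natDegree
        rwa [hdeg] at this
      rw [hcn, one_smul] at h0
      have hCH : (A ^ n : Matrix (Fin n) (Fin n) ℝ)
          = -∑ i ∈ Finset.range n, A.charpoly.coeff i • A ^ i :=
        eq_neg_of_add_eq_zero_right h0
      have hkey : (A ^ k).mulVec w
          = -∑ i ∈ Finset.range n, A.charpoly.coeff i • (A ^ (k - n + i)).mulVec w := by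
        have h1 : (A ^ k).mulVec w = (A ^ (k - n)).mulVecLin ((A ^ n).mulVec w) := by
          simp [Matrix.mulVec_mulVec, ← pow_add, Nat.sub_add_cancel hk]
        have h2 : (A ^ n).mulVec w
            = -∑ i ∈ Finset.range n, A.charpoly.coeff i • (A ^ i).mulVec w := by
          have h3 : (A ^ n).mulVec w = mulVecAt w (A ^ n) := rfl
          rw [h3, hCH, map_neg, map_sum]
          simp
        rw [h1, h2, map_neg, map_sum]
        congr 1
        refine Finset.sum_congr rfl fun i _ => ?_
        rw [map_smul]
        congr 1
        simp [Matrix.mulVec_mulVec, ← pow_add]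
      rw [hkey]
      refine neg_mem (Submodule.sum_mem _ fun i hi => Submodule.smul_mem _ _ ?_)
      exact ih (k - n + i) (by have := Finset.mem_range.mp hi; omega) 


lemma exp_smul_mulVec_mem_ctrlSub {n m : ℕ} (A : Matrix (Fin n) (Fin n) ℝ)
    (B : Matrix (Fin n) (Fin m) ℝ) (s : ℝ) (w : Fin n → ℝ)
    (hw : w ∈ LinearMap.range B.mulVecLin) :
    (NormedSpace.exp (s • A)).mulVec w ∈ ctrlSub A B := by
  letI : SeminormedRing (Matrix (Fin n) (Fin n) ℝ) := Matrix.linftyOpSemiNormedRing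
  letI : NormedRing (Matrix (Fin n) (Fin n) ℝ) := Matrix.linftyOpNormedRing
  letI : NormedAlgebra ℝ (Matrix (Fin n) (Fin n) ℝ) := Matrix.linftyOpNormedAlgebra
  have hclosed : IsClosed ((ctrlSub A B : Set (Fin n → ℝ))) :=
    Submodule.closed_of_finiteDimensional _
  have hsum : Summable fun j : ℕ => (j !⁻¹ : ℝ) • (s • A) ^ j :=
    NormedSpace.expSeries_summable' (s • A)
  let G : Matrix (Fin n) (Fin n) ℝ →L[ℝ] (Fin n → ℝ) :=
    LinearMap.toContinuousLinearMap (mulVecAt w)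
  have hG : (NormedSpace.exp (s • A)).mulVec w = ∑' j : ℕ, G ((j !⁻¹ : ℝ) • (s • A) ^ j) := by
    rw [NormedSpace.exp_eq_tsum (𝕂 := ℝ)]
    exact G.map_tsum hsum
  rw [hG]
  have hmem : ∀ j : ℕ, G ((j !⁻¹ : ℝ) • (s • A) ^ j) ∈ ctrlSub A B := by
    intro j
    have h1 : G ((j !⁻¹ : ℝ) • (s • A) ^ j) = ((j !⁻¹ : ℝ) * s ^ j) • ((A ^ j).mulVec w) := by
      show ((j !⁻¹ : ℝ) • (s • A) ^ j).mulVec w = _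
      rw [smul_pow, smul_smul, Matrix.smul_mulVec]
    rw [h1]
    exact Submodule.smul_mem _ _ (pow_mulVec_mem_ctrlSub A B j w hw)
  have hsum2 : Summable fun j : ℕ => G ((j !⁻¹ : ℝ) • (s • A) ^ j) :=
    hsum.map G G.continuous
  exact hclosed.mem_of_tendsto hsum2.hasSum
    (Filter.Eventually.of_forall fun fs => Submodule.sum_mem _ fun j _ => hmem j)

/-- Any state of the form `x = ∫_{t₀}^{t} e^{A(t−τ)} B u(τ) dτ` with `u` continuous lies in
the controllable subspace `⟨A|B⟩`. -/
theorem integral_mem_ctrlSub {n m : ℕ} (A : Matrix (Fin n) (Fin n) ℝ)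
    (B : Matrix (Fin n) (Fin m) ℝ) (t₀ t : ℝ) (ht : t₀ ≤ t)
    (u : ℝ → Fin m → ℝ) (hu : ContinuousOn u (Set.Icc t₀ t)) (x : Fin n → ℝ)
    (hx : x = ∫ τ in t₀..t, (NormedSpace.exp ((t - τ) • A)).mulVec (B.mulVec (u τ))) :
    x ∈ ctrlSub A B := by
  letI : SeminormedRing (Matrix (Fin n) (Fin n) ℝ) := Matrix.linftyOpSemiNormedRing
  letI : NormedRing (Matrix (Fin n) (Fin n) ℝ) := Matrix.linftyOpNormedRing
  letI : NormedAlgebra ℝ (Matrix (Fin n) (Fin n) ℝ) := Matrix.linftyOpNormedAlgebra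
  obtain ⟨q, hq⟩ := Submodule.exists_isCompl (ctrlSub A B)
  set f := q.projectionOnto (ctrlSub A B) hq.symm with hf
  set F := LinearMap.toContinuousLinearMap f with hFdef
  set g : ℝ → Fin n → ℝ :=
    fun τ => (NormedSpace.exp ((t - τ) • A)).mulVec (B.mulVec (u τ)) with hgdef
  have hker : ∀ y ∈ ctrlSub A B, F y = 0 := by
    intro y hy
    show f y = 0
    rw [← LinearMap.mem_ker, Submodule.ker_projectionOnto]
    exact hy
  have hgmem : ∀ τ : ℝ, g τ ∈ ctrlSub A B := fun τ =>
    exp_smul_mulVec_mem_ctrlSub A B (t - τ) _ ⟨u τ, rfl⟩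
  -- continuity of the integrand
  have hc1 : Continuous fun τ : ℝ => NormedSpace.exp ((t - τ) • A) :=
    (continuous_iff_continuousAt.2 fun y => (NormedSpace.exp_analytic (𝕂 := ℝ) y).continuousAt).comp ((continuous_const.sub continuous_id).smul continuous_const)
  have hc2 : ContinuousOn (fun τ => B.mulVec (u τ)) (Set.Icc t₀ t) :=
    (LinearMap.toContinuousLinearMap B.mulVecLin).continuous.comp_continuousOn hu
  have hmv : Continuous fun p : Matrix (Fin n) (Fin n) ℝ × (Fin n → ℝ) => p.1.mulVec p.2 :=
    Continuous.matrix_mulVec continuous_fst continuous_snd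
  have hg : ContinuousOn g (Set.Icc t₀ t) :=
    hmv.comp_continuousOn (hc1.continuousOn.prodMk hc2)
  have hint : IntervalIntegrable g MeasureTheory.volume t₀ t := by
    apply ContinuousOn.intervalIntegrable
    rwa [Set.uIcc_of_le ht]
  have hFx : F x = ∫ τ in t₀..t, F (g τ) := by
    rw [hx]
    exact (F.intervalIntegral_comp_comm hint).symm
  have hFx0 : F x = 0 := by
    rw [hFx]
    have : ∀ τ : ℝ, F (g τ) = 0 := fun τ => hker _ (hgmem τ)
    simp [this]
  have : x ∈ LinearMap.ker f := hFx0
  rwa [Submodule.ker_projectionOnto] at this
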